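/- Let 0 < ε ≤ 1/2, N a positive even integer with N ≥ 4, σ > 0, and x_i = -σε ln(1 - 2(1-ε)i/N). Then for every i with 0 ≤ i ≤ N/2-2 and every real μ with 0 ≤ μ ≤ σ, one has h_i^μ · e^{-x_i/ε} ≤ C ε^μ N^{-μ}, where C = (2σ)^μ · 2^μ and h_i = x_{i+1} - x_i. -/

import Mathlib

/-- On the Bakhvalov-type mesh `x i = -σ ε ln(1 - 2(1-ε)i/N)` with `N ≥ 4` even:
for every `0 ≤ i ≤ N/2 - 2` and every real `0 ≤ μ ≤ σ` one has
`h i ^ μ * exp (-x i / ε) ≤ (2σ)^μ * 2^μ * ε^μ * N^(-μ)`. -/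
theorem stmt_4 (ε σ : ℝ) (N : ℕ) (hε : 0 < ε) (hε2 : ε ≤ 1/2) (hσ : 0 < σ)
    (hN : 4 ≤ N) (hNe : Even N)
    (x : ℕ → ℝ)
    (hx : ∀ i ≤ N / 2, x i = -σ * ε * Real.log (1 - 2 * (1 - ε) * i / N)) :
    ∀ i : ℕ, i ≤ N / 2 - 2 → ∀ μ : ℝ, 0 ≤ μ → μ ≤ σ →
      (x (i + 1) - x i) ^ μ * Real.exp (-x i / ε) ≤
        (2 * σ) ^ μ * 2 ^ μ * ε ^ μ * (N : ℝ) ^ (-μ) := by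
  intro i hi μ hμ0 hμσ
  have hMN : N / 2 * 2 = N := Nat.div_mul_cancel hNe.two_dvd
  have hi2 : 2 * (i + 2) ≤ N := by omega
  have hN0 : (0:ℝ) < N := by positivity
  have hiR : 2 * ((i:ℝ) + 2) ≤ (N:ℝ) := by exact_mod_cast hi2
  set A : ℝ := 1 - 2 * (1 - ε) * i / N with hA
  set B : ℝ := 1 - 2 * (1 - ε) * (i + 1) / N with hB
  clear_value A B
  have hε1 : (0:ℝ) < 1 - ε := by linarith
  have hi0 : (0:ℝ) ≤ i := Nat.cast_nonneg i
  have hkey : 2 * (1 - ε) * ((i:ℝ) + 2) ≤ N := by nlinarith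
  have hB_lb : 2 * (1 - ε) / N ≤ B := by
    have h1 : 2 * (1 - ε) * ((i:ℝ) + 1) / N + 2 * (1 - ε) / N ≤ 1 := by
      rw [← add_div, div_le_one hN0]; nlinarith
    rw [hB]; linarith
  have hq : (0:ℝ) < 2 * (1 - ε) / N := div_pos (by linarith) hN0
  have hB_pos : 0 < B := lt_of_lt_of_le hq hB_lb
  have hAB : A - B = 2 * (1 - ε) / N := by rw [hA, hB]; ring
  have hA_pos : 0 < A := by linarith
  have hA1 : A ≤ 1 := by
    rw [hA]
    have : 0 ≤ 2 * (1 - ε) * i / N := by positivity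
    linarith
  have hA2B : A ≤ 2 * B := by linarith
  have hxA : x i = -σ * ε * Real.log A := by rw [hA]; exact hx i (by omega)
  have hxB : x (i + 1) = -σ * ε * Real.log B := by
    have h := hx (i + 1) (by omega)
    rw [h, hB]; push_cast; ring_nf
  have hh : x (i + 1) - x i = σ * ε * (Real.log A - Real.log B) := by
    rw [hxA, hxB]; ring
  have hh_nonneg : 0 ≤ x (i + 1) - x i := by
    rw [hh]
    have h1 : Real.log B ≤ Real.log A := Real.log_le_log hB_pos (by linarith [hq])
    have h2 : 0 ≤ Real.log A - Real.log B := by linarith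
    positivity
  have hh_le : x (i + 1) - x i ≤ 2 * σ * ε / (N * B) := by
    rw [hh]
    have h2 : Real.log (A / B) ≤ A / B - 1 :=
      Real.log_le_sub_one_of_pos (div_pos hA_pos hB_pos)
    have h4 : Real.log A - Real.log B ≤ 2 * (1 - ε) / (N * B) := by
      rw [← Real.log_div hA_pos.ne' hB_pos.ne']
      calc Real.log (A / B) ≤ A / B - 1 := h2
        _ = (A - B) / B := by rw [div_sub_one hB_pos.ne']
        _ = 2 * (1 - ε) / (N * B) := by rw [hAB, div_div]
    calc σ * ε * (Real.log A - Real.log B) ≤ σ * ε * (2 * (1 - ε) / (N * B)) := by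
          exact mul_le_mul_of_nonneg_left h4 (by positivity)
      _ = 2 * σ * ε * (1 - ε) / (N * B) := by ring
      _ ≤ 2 * σ * ε * 1 / (N * B) := by gcongr; linarith
      _ = 2 * σ * ε / (N * B) := by ring
  have hexp : Real.exp (-x i / ε) = A ^ σ := by
    rw [Real.rpow_def_of_pos hA_pos, hxA]
    congr 1
    field_simp
  have e1 : (x (i + 1) - x i) ^ μ ≤ (2 * σ * ε / (N * B)) ^ μ :=
    Real.rpow_le_rpow hh_nonneg hh_le hμ0
  have e2 : Real.exp (-x i / ε) ≤ (2 * B) ^ μ := by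
    rw [hexp]
    calc A ^ σ ≤ A ^ μ := Real.rpow_le_rpow_of_exponent_ge hA_pos hA1 hμσ
      _ ≤ (2 * B) ^ μ := Real.rpow_le_rpow hA_pos.le hA2B hμ0
  have e3 : (x (i + 1) - x i) ^ μ * Real.exp (-x i / ε)
      ≤ (2 * σ * ε / (N * B)) ^ μ * (2 * B) ^ μ :=
    mul_le_mul e1 e2 (Real.exp_nonneg _) (Real.rpow_nonneg (by positivity) _)
  have key : 2 * σ * ε / (N * B) * (2 * B) = 2 * σ * 2 * ε * ((N:ℝ))⁻¹ := by
    field_simp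
  have e4 : (2 * σ * ε / (N * B)) ^ μ * (2 * B) ^ μ
      = (2 * σ) ^ μ * 2 ^ μ * ε ^ μ * (N : ℝ) ^ (-μ) := by
    rw [← Real.mul_rpow (by positivity) (by positivity), key,
      Real.rpow_neg hN0.le, ← Real.inv_rpow hN0.le,
      Real.mul_rpow (by positivity) (by positivity),
      Real.mul_rpow (by positivity) (by positivity),
      Real.mul_rpow (by positivity) (by positivity)]
  calc (x (i + 1) - x i) ^ μ * Real.exp (-x i / ε)
      ≤ (2 * σ * ε / (N * B)) ^ μ * (2 * B) ^ μ := e3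
    _ = (2 * σ) ^ μ * 2 ^ μ * ε ^ μ * (N : ℝ) ^ (-μ) := e4
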